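/- Let f : ℕ → ℕ be a non-decreasing unbounded total recursive function such that ∑_{n=0}^∞ 2^{n−f(n)} = ∞, and let h enumerate in increasing order the set {n : f(n) < f(n+1)}. Then ∑_{j=1}^∞ 2^{h(j)−f(h(j))} = ∞. -/
import Mathlib

open Filter Finset

lemma const_on_block_aux (f : ℕ → ℕ) (hmono : Monotone f)
    (h : ℕ → ℕ) (hh : StrictMono h)
    (hrange : Set.range h = {n : ℕ | f n < f (n + 1)}) (J : ℕ) :
    ∀ k n, h J < n → n + k = h (J + 1) → f n = f (h (J + 1)) := by
  intro k
  induction k with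
  | zero => intro n _ hn; simpa using congrArg f hn
  | succ k ih =>
    intro n h1 h2
    have hlt' : n < h (J + 1) := by omega
    have hn1 : f n = f (n + 1) := by
      rcases lt_or_eq_of_le (hmono (Nat.le_succ n)) with hlt | he
      · exfalso
        have : n ∈ Set.range h := by rw [hrange]; exact hlt
        obtain ⟨m, hm⟩ := this
        have hJm : J < m := hh.lt_iff_lt.mp (by omega)
        have : h (J + 1) ≤ h m := hh.le_iff_le.mpr (by omega)
        omega
      · exact he
    rw [hn1]
    exact ih (n + 1) (by omega) (by omega)

theorem sum_divergence (f : ℕ → ℕ) (hmono : Monotone f) (hcomp : Computable f)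
    (htend : Tendsto f atTop atTop)
    (h : ℕ → ℕ) (hh : StrictMono h)
    (hrange : Set.range h = {n : ℕ | f n < f (n + 1)})
    (hdiv : ¬ Summable (fun n : ℕ => (2 : ℝ) ^ ((n : ℤ) - (f n : ℤ)))) :
    ¬ Summable (fun j : ℕ => (2 : ℝ) ^ ((h (j + 1) : ℤ) - (f (h (j + 1)) : ℤ))) := by
  intro hs
  apply hdiv
  set T : ℕ → ℝ := fun n => (2 : ℝ) ^ ((n : ℤ) - (f n : ℤ)) with hT
  set g : ℕ → ℝ := fun j => (2 : ℝ) ^ ((h (j + 1) : ℤ) - (f (h (j + 1)) : ℤ)) with hg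
  have hTpos : ∀ n, 0 ≤ T n := fun n => le_of_lt (zpow_pos (by norm_num) _)
  have hgpos : ∀ j, 0 ≤ g j := fun j => le_of_lt (zpow_pos (by norm_num) _)
  set B0 : ℝ := ∑ n ∈ range (h 0 + 1), T n with hB0
  -- block sum bound
  have hblock : ∀ J : ℕ, ∑ n ∈ Ico (h J + 1) (h (J + 1) + 1), T n ≤ 2 * g J := by
    intro J
    have hconst : ∀ n ∈ Ico (h J + 1) (h (J + 1) + 1), T n = (2 : ℝ) ^ ((n : ℤ)) * (2 : ℝ) ^ (-(f (h (J + 1)) : ℤ)) := by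
      intro n hn
      simp only [mem_Ico] at hn
      have := const_on_block_aux f hmono h hh hrange J (h (J + 1) - n) n (by omega) (by omega)
      rw [hT]
      simp only [this]
      rw [sub_eq_add_neg, zpow_add₀ (by norm_num : (2:ℝ) ≠ 0)]
    rw [Finset.sum_congr rfl hconst, ← Finset.sum_mul]
    have hsum : ∑ n ∈ Ico (h J + 1) (h (J + 1) + 1), (2 : ℝ) ^ (n : ℤ) ≤ 2 ^ (h (J + 1) + 1) := by
      have h1 : ∑ n ∈ Ico (h J + 1) (h (J + 1) + 1), (2 : ℝ) ^ (n : ℤ)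
          ≤ ∑ n ∈ range (h (J + 1) + 1), (2 : ℝ) ^ (n : ℤ) := by
        apply Finset.sum_le_sum_of_subset_of_nonneg
        · intro x hx; simp only [mem_Ico, mem_range] at *; omega
        · intro i _ _; positivity
      calc _ ≤ ∑ n ∈ range (h (J + 1) + 1), (2 : ℝ) ^ (n : ℤ) := h1
        _ = ∑ n ∈ range (h (J + 1) + 1), (2 : ℝ) ^ n := by
            apply Finset.sum_congr rfl; intro n _; exact zpow_natCast 2 n
        _ = (2 ^ (h (J + 1) + 1) - 1) / (2 - 1) := geom_sum_eq (by norm_num) _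
        _ ≤ 2 ^ (h (J + 1) + 1) := by norm_num
    have h2 : (0:ℝ) ≤ (2 : ℝ) ^ (-(f (h (J + 1)) : ℤ)) := by positivity
    calc _ ≤ (2 : ℝ) ^ (h (J + 1) + 1) * (2 : ℝ) ^ (-(f (h (J + 1)) : ℤ)) :=
          mul_le_mul_of_nonneg_right hsum h2
      _ = 2 * g J := by
          show _ = 2 * (2:ℝ) ^ ((h (J + 1) : ℤ) - (f (h (J + 1)) : ℤ))
          rw [sub_eq_add_neg, zpow_add₀ (by norm_num : (2:ℝ) ≠ 0), pow_succ, zpow_natCast]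
          ring
  -- partial sums up to h J + 1
  have hpart : ∀ J : ℕ, ∑ n ∈ range (h J + 1), T n ≤ B0 + 2 * ∑ j ∈ range J, g j := by
    intro J
    induction J with
    | zero => simp [hB0]
    | succ J ih =>
      have hle : h J + 1 ≤ h (J + 1) + 1 := by
        have := hh (lt_add_one J); omega
      rw [← Finset.sum_range_add_sum_Ico T hle]
      have hgs : ∑ j ∈ range (J + 1), g j = ∑ j ∈ range J, g j + g J :=
        Finset.sum_range_succ g J
      rw [hgs]
      have := hblock J
      linarith
  have hC : ∀ N : ℕ, ∑ n ∈ range N, T n ≤ B0 + 2 * ∑' j, g j := by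
    intro N
    have h1 : ∑ n ∈ range N, T n ≤ ∑ n ∈ range (h N + 1), T n := by
      apply Finset.sum_le_sum_of_subset_of_nonneg
      · intro x hx; simp only [mem_range] at *
        have := hh.le_apply (x := N); omega
      · intro i _ _; exact hTpos i
    have h2 := hpart N
    have h3 : ∑ j ∈ range N, g j ≤ ∑' j, g j :=
      Summable.sum_le_tsum _ (fun i _ => hgpos i) hs
    linarith
  exact summable_of_sum_range_le hTpos hC
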